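/- In the set-cover reduction graph under max-retrieval constraint R = 1, a feasible BMR solution in which no element version is materialized induces a valid set cover: the family {A_i : a_i materialized} covers all elements o_1,...,o_n, because each b_j must be retrieved via a single stored edge from a materialized a_i with o_j ∈ A_i. -/
import Mathlib


/-- Edges of the set-cover reduction graph: set versions `a_i` (left), element
versions `b_j` (right); symmetric unit-cost deltas between distinct set versions,
and between `a_i` and `b_j` whenever element `o_j ∈ A_i` (i.e. `mem i j`). -/
def covEdge {m n : ℕ} (mem : Fin m → Fin n → Prop) :
    Sum (Fin m) (Fin n) → Sum (Fin m) (Fin n) → Prop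
  | Sum.inl i, Sum.inl i' => i ≠ i'
  | Sum.inl i, Sum.inr j => mem i j
  | Sum.inr j, Sum.inl i => mem i j
  | Sum.inr _, Sum.inr _ => False

/-- In the set-cover reduction graph under max-retrieval constraint `R = 1`, a
feasible BMR solution (each non-materialized version retrieved via a single stored
delta from a materialized version) in which no element version is materialized
induces a valid set cover: each element `o_j` is covered by some materialized set
version `a_i` with `o_j ∈ A_i`. -/
theorem bmr_solution_induces_set_cover (m n : ℕ)
    (mem : Fin m → Fin n → Prop)
    (M : Finset (Sum (Fin m) (Fin n)))
    (par : Sum (Fin m) (Fin n) → Sum (Fin m) (Fin n))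
    (hfeas : ∀ v ∉ M, par v ∈ M ∧ covEdge mem (par v) v)
    (hnoelem : ∀ j : Fin n, Sum.inr j ∉ M) :
    ∀ j : Fin n, ∃ i : Fin m, Sum.inl i ∈ M ∧ mem i j := by
  intro j
  obtain ⟨hM, hedge⟩ := hfeas (Sum.inr j) (hnoelem j)
  match h : par (Sum.inr j) with
  | Sum.inl i => exact ⟨i, h ▸ hM, by rw [h] at hedge; exact hedge⟩
  | Sum.inr j' => rw [h] at hedge; exact absurd hedge (by simp [covEdge])
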